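/- Fix 3 ≤ k ≤ r+1 and let t = k−1. Then ex(t·n, H_k^r) ≥ t^r·ex(n, H_k^r) + (1/n)·C(tn, r) − (1/n)·t^r·C(n, r) − (1/2)·t^{r−1}·(t−1)·C(n−1, r−2). -/

import Mathlib

open Finset

/-- `G` contains no copy of `H_k^r` (the `r`-uniform hypergraph with `r+1` vertices
and `k` edges). -/
def DaisyFree (r k : ℕ) {V : Type*} [DecidableEq V] (G : Finset (Finset V)) : Prop :=
  ¬ ∃ B : Finset V, B.card = r + 1 ∧ ∃ Z ⊆ B, Z.card = k ∧ ∀ z ∈ Z, B.erase z ∈ G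

/-- The Turán number `ex(n, H_k^r)`. -/
noncomputable def exDaisy (n r k : ℕ) : ℕ :=
  sSup {m | ∃ G : Finset (Finset (Fin n)),
    (∀ e ∈ G, e.card = r) ∧ DaisyFree r k G ∧ G.card = m}

lemma daisyFree_empty {r k : ℕ} (hk : 0 < k) {V : Type*} [DecidableEq V] :
    DaisyFree r k (∅ : Finset (Finset V)) := by
  rintro ⟨B, -, Z, -, hZk, hZ⟩
  have hne : Z.Nonempty := by rw [← Finset.card_pos, hZk]; exact hk
  obtain ⟨z, hz⟩ := hne
  simpa using hZ z hz

lemma exDaisy_bddAbove (n r k : ℕ) : BddAbove {m | ∃ G : Finset (Finset (Fin n)),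
    (∀ e ∈ G, e.card = r) ∧ DaisyFree r k G ∧ G.card = m} := by
  refine ⟨n.choose r, ?_⟩
  rintro m ⟨G, hu, -, rfl⟩
  have hsub : G ⊆ (univ : Finset (Fin n)).powersetCard r := fun e he => by
    simp [Finset.mem_powersetCard_univ, hu e he]
  calc G.card ≤ ((univ : Finset (Fin n)).powersetCard r).card := Finset.card_le_card hsub
    _ = n.choose r := by simp [Finset.card_powersetCard]

lemma le_exDaisy {N r k m : ℕ} (h : ∃ G : Finset (Finset (Fin N)),
    (∀ e ∈ G, e.card = r) ∧ DaisyFree r k G ∧ G.card = m) : m ≤ exDaisy N r k :=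
  le_csSup (exDaisy_bddAbove N r k) h

lemma exists_extremal {k : ℕ} (hk : 0 < k) (n r : ℕ) : ∃ G : Finset (Finset (Fin n)),
    (∀ e ∈ G, e.card = r) ∧ DaisyFree r k G ∧ G.card = exDaisy n r k := by
  have hne : {m | ∃ G : Finset (Finset (Fin n)),
      (∀ e ∈ G, e.card = r) ∧ DaisyFree r k G ∧ G.card = m}.Nonempty :=
    ⟨0, ∅, by simp, daisyFree_empty hk, by simp⟩
  exact Nat.sSup_mem hne (exDaisy_bddAbove n r k)

lemma daisyFree_map {r k : ℕ} {V W : Type*} [DecidableEq V] [DecidableEq W] (e : V ≃ W)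
    {G : Finset (Finset V)} (h : DaisyFree r k G) :
    DaisyFree r k (G.image (fun A => A.image e)) := by
  rintro ⟨B, hB, Z, hZB, hZk, hZ⟩
  refine h ⟨B.image e.symm, ?_, Z.image e.symm, Finset.image_subset_image hZB, ?_, ?_⟩
  · rw [Finset.card_image_of_injective _ e.symm.injective, hB]
  · rw [Finset.card_image_of_injective _ e.symm.injective, hZk]
  · rintro z hz
    simp only [Finset.mem_image] at hz
    obtain ⟨z₀, hz₀, rfl⟩ := hz
    have h2 := hZ z₀ hz₀
    simp only [Finset.mem_image] at h2
    obtain ⟨C, hC, hCe⟩ := h2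
    have hCeq : C = (B.erase z₀).image e.symm := by
      rw [← hCe, Finset.image_image]
      simp
    rw [Finset.image_erase e.symm.injective] at hCeq
    rwa [← hCeq]

lemma helper_card_image_lt {α β : Type*} [DecidableEq α] [DecidableEq β] {s : Finset α} {f : α → β}
    {u v : α} (hu : u ∈ s) (hv : v ∈ s) (huv : u ≠ v) (hf : f u = f v) :
    (s.image f).card < s.card := by
  have h1 : s.image f = (s.erase u).image f := by
    apply Finset.Subset.antisymm
    · intro b hb
      simp only [Finset.mem_image] at hb ⊢
      obtain ⟨a, ha, rfl⟩ := hb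
      by_cases hau : a = u
      · exact ⟨v, Finset.mem_erase.mpr ⟨huv.symm, hv⟩, by rw [hau, hf]⟩
      · exact ⟨a, Finset.mem_erase.mpr ⟨hau, ha⟩, rfl⟩
    · exact Finset.image_subset_image (Finset.erase_subset _ _)
  rw [h1]
  calc ((s.erase u).image f).card ≤ (s.erase u).card := Finset.card_image_le
    _ < s.card := Finset.card_erase_lt_of_mem hu

lemma fiber_count {t n : ℕ} (ht : 0 < t) (E : Finset (Fin n)) :
    (((univ : Finset (Fin t × Fin n)).powersetCard E.card).filter
      (fun A => A.image Prod.snd = E)).card = t ^ E.card := by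
  have hpi : (E.pi (fun _ => Finset.range t)).card = t ^ E.card := by
    rw [Finset.card_pi]
    simp [Finset.prod_const]
  rw [← hpi]
  refine Finset.card_bij'
    (i := fun A _ => fun x _ => A.sup (fun a => if a.2 = x then (a.1 : ℕ) else 0))
    (j := fun f hf => E.attach.image (fun x =>
      ((⟨f x.1 x.2, by simpa using Finset.mem_pi.mp hf x.1 x.2⟩ : Fin t), x.1)))
    ?_ ?_ ?_ ?_
  · -- i maps into pi
    intro A hA
    rw [Finset.mem_pi]
    intro x hx
    rw [Finset.mem_range]
    rw [Finset.sup_lt_iff (by simpa using ht)]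
    intro a _
    split
    · exact a.1.2
    · exact ht
  · -- j maps into s
    intro f hf
    simp only [Finset.mem_filter, Finset.mem_powersetCard_univ]
    constructor
    · rw [Finset.card_image_of_injective _ (fun x y h => Subtype.ext (congrArg Prod.snd h)),
        Finset.card_attach]
    · rw [Finset.image_image]
      exact Finset.attach_image_val
  · -- left inverse
    intro A hA
    simp only [Finset.mem_filter, Finset.mem_powersetCard_univ] at hA
    obtain ⟨hcard, himg⟩ := hA
    have hinj : Set.InjOn Prod.snd (A : Set (Fin t × Fin n)) := by
      rw [← Finset.card_image_iff]
      rw [himg, hcard]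
    refine (Finset.eq_of_subset_of_card_le ?_ ?_).symm
    · intro a ha
      have ha2 : a.2 ∈ E := by rw [← himg]; exact Finset.mem_image_of_mem _ ha
      rw [Finset.mem_image]
      refine ⟨⟨a.2, ha2⟩, Finset.mem_attach _ _, ?_⟩
      have hsup : A.sup (fun b => if b.2 = a.2 then (b.1 : ℕ) else 0) = (a.1 : ℕ) := by
        apply le_antisymm
        · apply Finset.sup_le
          intro b hb
          split
          · next h => rw [hinj hb ha h]
          · exact Nat.zero_le _
        · have := Finset.le_sup (f := fun b => if b.2 = a.2 then (b.1 : ℕ) else 0) ha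
          simpa using this
      exact Prod.ext (Fin.ext hsup) rfl
    · calc (E.attach.image _).card ≤ E.attach.card := Finset.card_image_le
        _ = A.card := by rw [Finset.card_attach, hcard]
  · -- right inverse
    intro f hf
    funext x hx
    show (E.attach.image _).sup (fun a : Fin t × Fin n => if a.2 = x then (a.1 : ℕ) else 0) = f x hx
    rw [Finset.sup_image]
    apply le_antisymm
    · apply Finset.sup_le
      intro y _
      simp only [Function.comp]
      split
      · next h =>
        subst h
        exact le_of_eq rfl
      · exact Nat.zero_le _
    · have := Finset.le_sup (s := E.attach)
        (f := (fun a => if a.2 = x then ((a.1 : Fin t) : ℕ) else 0) ∘ (fun x =>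
          ((⟨f x.1 x.2, by simpa using Finset.mem_pi.mp hf x.1 x.2⟩ : Fin t), x.1)))
        (Finset.mem_attach _ ⟨x, hx⟩)
      simpa using this

lemma graph_count {t n m : ℕ} (ht : 0 < t) (𝒜 : Finset (Finset (Fin n)))
    (h𝒜 : ∀ E ∈ 𝒜, E.card = m) :
    (((univ : Finset (Fin t × Fin n)).powersetCard m).filter
      (fun A => A.image Prod.snd ∈ 𝒜)).card = t ^ m * 𝒜.card := by
  rw [Finset.card_eq_sum_card_fiberwise
    (s := ((univ : Finset (Fin t × Fin n)).powersetCard m).filter (fun A => A.image Prod.snd ∈ 𝒜))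
    (f := fun A : Finset (Fin t × Fin n) => A.image Prod.snd) (t := 𝒜)
    (fun A hA => (Finset.mem_filter.mp hA).2)]
  have key : ∀ E ∈ 𝒜, ((((univ : Finset (Fin t × Fin n)).powersetCard m).filter
      (fun A => A.image Prod.snd ∈ 𝒜)).filter (fun A => A.image Prod.snd = E)).card = t ^ m := by
    intro E hE
    have h1 : (((univ : Finset (Fin t × Fin n)).powersetCard m).filter
        (fun A => A.image Prod.snd ∈ 𝒜)).filter (fun A => A.image Prod.snd = E) =
        ((univ : Finset (Fin t × Fin n)).powersetCard E.card).filter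
        (fun A => A.image Prod.snd = E) := by
      ext A
      simp only [Finset.mem_filter, Finset.mem_powersetCard_univ, h𝒜 E hE]
      constructor
      · rintro ⟨⟨h1, -⟩, h2⟩; exact ⟨h1, h2⟩
      · rintro ⟨h1, h2⟩; exact ⟨⟨h1, h2 ▸ hE⟩, h2⟩
    rw [h1, fiber_count ht E, h𝒜 E hE]
  rw [Finset.sum_congr rfl key, Finset.sum_const, smul_eq_mul, mul_comm]

lemma br1_bound {t n r : ℕ} (ht : 0 < t) (hn : 0 < n) (hr : 2 ≤ r) :
    (((univ : Finset (Fin t × Fin n)).powersetCard r).filter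
      (fun A => (A.image Prod.snd).card + 1 = r)).card
    ≤ n * ((n-1).choose (r-2) * (t.choose 2 * t^(r-2))) := by
  set Br1 := ((univ : Finset (Fin t × Fin n)).powersetCard r).filter
      (fun A => (A.image Prod.snd).card + 1 = r) with hBr1
  set x0 : Finset (Fin t × Fin n) → Fin n := fun A =>
    if h : ((A.image Prod.snd).filter
        (fun x => 2 ≤ (A.filter (fun a => a.2 = x)).card)).Nonempty
    then ((A.image Prod.snd).filter
        (fun x => 2 ≤ (A.filter (fun a => a.2 = x)).card)).min' h
    else ⟨0, hn⟩ with hx0def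
  -- key structural facts for members of the fiber over x
  have struct : ∀ x : Fin n, ∀ A ∈ Br1.filter (fun A => x0 A = x),
      x ∈ A.image Prod.snd ∧
      (A.filter (fun a => a.2 = x)).card = 2 ∧
      (A.filter (fun a => ¬ a.2 = x)).card = r - 2 ∧
      ((A.filter (fun a => ¬ a.2 = x)).image Prod.snd).card = r - 2 ∧
      x ∉ (A.filter (fun a => ¬ a.2 = x)).image Prod.snd := by
    intro x A hA
    simp only [Finset.mem_filter, Finset.mem_powersetCard_univ, hBr1] at hA
    obtain ⟨⟨hcard, himg⟩, hfib⟩ := hA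
    have hne : ((A.image Prod.snd).filter
        (fun x => 2 ≤ (A.filter (fun a => a.2 = x)).card)).Nonempty := by
      obtain ⟨a, ha, b, hb, hab, habe⟩ :=
        Finset.exists_ne_map_eq_of_card_lt_of_maps_to
          (t := A.image Prod.snd) (by omega) (fun a ha => Finset.mem_image_of_mem _ ha)
      refine ⟨a.2, Finset.mem_filter.mpr ⟨Finset.mem_image_of_mem _ ha, ?_⟩⟩
      have hsub : ({a, b} : Finset (Fin t × Fin n)) ⊆ A.filter (fun c => c.2 = a.2) := by
        intro c hc
        rcases Finset.mem_insert.mp hc with rfl | hc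
        · exact Finset.mem_filter.mpr ⟨ha, rfl⟩
        · rw [Finset.mem_singleton.mp hc]
          exact Finset.mem_filter.mpr ⟨hb, habe.symm⟩
      calc 2 = ({a, b} : Finset (Fin t × Fin n)).card := (Finset.card_pair hab).symm
        _ ≤ _ := Finset.card_le_card hsub
    have hxmem : x ∈ (A.image Prod.snd).filter
        (fun x => 2 ≤ (A.filter (fun a => a.2 = x)).card) := by
      rw [← hfib, hx0def]
      simp only [dif_pos hne]
      exact Finset.min'_mem _ hne
    rw [Finset.mem_filter] at hxmem
    obtain ⟨hxim, hF2⟩ := hxmem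
    have hsplit : (A.filter (fun a => a.2 = x)).card
        + (A.filter (fun a => ¬ a.2 = x)).card = r := by
      rw [Finset.card_filter_add_card_filter_not, hcard]
    have himg2 : A.image Prod.snd =
        insert x ((A.filter (fun a => ¬ a.2 = x)).image Prod.snd) := by
      ext y
      simp only [Finset.mem_insert, Finset.mem_image, Finset.mem_filter]
      constructor
      · rintro ⟨a, ha, rfl⟩
        by_cases h : a.2 = x
        · exact Or.inl h
        · exact Or.inr ⟨a, ⟨ha, h⟩, rfl⟩
      · rintro (rfl | ⟨a, ⟨ha, -⟩, rfl⟩)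
        · simpa [Finset.mem_image] using hxim
        · exact ⟨a, ha, rfl⟩
    have hxnot : x ∉ (A.filter (fun a => ¬ a.2 = x)).image Prod.snd := by
      simp only [Finset.mem_image, Finset.mem_filter]
      rintro ⟨a, ⟨-, h⟩, rfl⟩
      exact h rfl
    have himc : ((A.filter (fun a => ¬ a.2 = x)).image Prod.snd).card + 2 = r := by
      rw [himg2, Finset.card_insert_of_notMem hxnot] at himg
      omega
    have hle : ((A.filter (fun a => ¬ a.2 = x)).image Prod.snd).card
        ≤ (A.filter (fun a => ¬ a.2 = x)).card := Finset.card_image_le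
    refine ⟨hxim, by omega, by omega, by omega, hxnot⟩
  have fiber_bound : ∀ x : Fin n, (Br1.filter (fun A => x0 A = x)).card
      ≤ t.choose 2 * (t ^ (r-2) * (n-1).choose (r-2)) := by
    intro x
    have hD : (((univ : Finset (Fin t)).powersetCard 2) ×ˢ
        (((univ : Finset (Fin t × Fin n)).powersetCard (r-2)).filter
          (fun B => B.image Prod.snd ∈ ((univ : Finset (Fin n)).erase x).powersetCard (r-2)))).card
        = t.choose 2 * (t ^ (r-2) * (n-1).choose (r-2)) := by
      rw [Finset.card_product, Finset.card_powersetCard,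
        graph_count ht _ (fun E hE => (Finset.mem_powersetCard.mp hE).2),
        Finset.card_powersetCard, Finset.card_erase_of_mem (Finset.mem_univ x)]
      simp
    rw [← hD]
    apply Finset.card_le_card_of_injOn
      (fun A => ((A.filter (fun a => a.2 = x)).image Prod.fst, A.filter (fun a => ¬ a.2 = x)))
    · intro A hA
      obtain ⟨hxim, hF, hB, hBim, hxnot⟩ := struct x A hA
      rw [Finset.mem_coe, Finset.mem_product]
      constructor
      · rw [Finset.mem_powersetCard_univ]
        rw [Finset.card_image_of_injOn, hF]
        intro a ha b hb h
        rw [Finset.mem_coe, Finset.mem_filter] at ha hb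
        exact Prod.ext h (ha.2.trans hb.2.symm)
      · rw [Finset.mem_filter, Finset.mem_powersetCard_univ, Finset.mem_powersetCard]
        refine ⟨hB, ?_, hBim⟩
        intro y hy
        rcases Finset.mem_image.mp hy with ⟨a, ha, rfl⟩
        rw [Finset.mem_filter] at ha
        exact Finset.mem_erase.mpr ⟨by rintro rfl; exact ha.2 rfl, Finset.mem_univ _⟩
    · intro A hA A' hA' heq
      rw [Prod.mk.injEq] at heq
      obtain ⟨hP, hBeq⟩ := heq
      have key : ∀ C ∈ Br1.filter (fun A => x0 A = x),
          C.filter (fun a => a.2 = x) =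
          ((C.filter (fun a => a.2 = x)).image Prod.fst).image (fun l => (l, x)) := by
        intro C hC
        ext a
        simp only [Finset.mem_image, Finset.mem_filter]
        constructor
        · rintro ⟨ha, rfl⟩
          exact ⟨a.1, ⟨a, ⟨ha, rfl⟩, rfl⟩, rfl⟩
        · rintro ⟨l, ⟨b, ⟨hb, hb2⟩, rfl⟩, rfl⟩
          have : b = (b.1, x) := Prod.ext rfl hb2
          rw [← this]
          exact ⟨hb, hb2⟩
      have hAe : A = A.filter (fun a => a.2 = x) ∪ A.filter (fun a => ¬ a.2 = x) :=
        (Finset.filter_union_filter_not_eq _ A).symm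
      have hAe' : A' = A'.filter (fun a => a.2 = x) ∪ A'.filter (fun a => ¬ a.2 = x) :=
        (Finset.filter_union_filter_not_eq _ A').symm
      rw [hAe, hAe', key A hA, key A' hA', hP, hBeq]
  calc Br1.card = ∑ x : Fin n, (Br1.filter (fun A => x0 A = x)).card :=
        Finset.card_eq_sum_card_fiberwise (fun A _ => Finset.mem_univ (x0 A))
    _ ≤ ∑ _x : Fin n, t.choose 2 * (t ^ (r-2) * (n-1).choose (r-2)) :=
        Finset.sum_le_sum (fun x _ => fiber_bound x)
    _ = n * ((n-1).choose (r-2) * (t.choose 2 * t^(r-2))) := by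
        rw [Finset.sum_const, smul_eq_mul, Finset.card_univ, Fintype.card_fin]; ring

lemma gj_free {n r k t : ℕ} (hk : 3 ≤ k) (hkr : k ≤ r + 1) (ht : t = k - 1) (hn : 0 < n)
    (G0 : Finset (Finset (Fin n))) (hG0u : ∀ e ∈ G0, e.card = r) (hG0f : DaisyFree r k G0)
    (j : ZMod n) :
    DaisyFree r k ((((univ : Finset (Fin t × Fin n)).powersetCard r).filter
        (fun A => A.image Prod.snd ∈ G0)) ∪
      (((univ : Finset (Fin t × Fin n)).powersetCard r).filter
        (fun A => (A.image Prod.snd).card + 2 ≤ r ∧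
          ∑ a ∈ A, ((a.2 : ℕ) : ZMod n) = j))) := by
  haveI : NeZero n := ⟨hn.ne'⟩
  have hr : 2 ≤ r := by omega
  have ht2 : 2 ≤ t := by omega
  rintro ⟨B, hB, Z, hZB, hZk, hZ⟩
  have hz' : ∀ z ∈ Z, ((B.erase z).image Prod.snd ∈ G0) ∨
      (((B.erase z).image Prod.snd).card + 2 ≤ r ∧
        ∑ a ∈ B.erase z, ((a.2 : ℕ) : ZMod n) = j) := by
    intro z hz
    have := hZ z hz
    rw [Finset.mem_union, Finset.mem_filter, Finset.mem_filter] at this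
    tauto
  set I := B.image Prod.snd with hIdef
  by_cases hI : I.card = r + 1
  · -- projection injective on B
    have hinj : Set.InjOn Prod.snd (B : Set (Fin t × Fin n)) := by
      rw [← Finset.card_image_iff, ← hIdef, hI, hB]
    refine hG0f ⟨I, hI, Z.image Prod.snd, Finset.image_subset_image hZB, ?_, ?_⟩
    · rw [Finset.card_image_of_injOn (hinj.mono (by exact_mod_cast hZB)), hZk]
    · intro w hw
      obtain ⟨z, hz, rfl⟩ := Finset.mem_image.mp hw
      have hzB : z ∈ B := hZB hz
      have hkey : (B.erase z).image Prod.snd = I.erase z.2 := by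
        ext y
        simp only [Finset.mem_image, Finset.mem_erase, hIdef]
        constructor
        · rintro ⟨b, ⟨hbz, hb⟩, rfl⟩
          refine ⟨fun h => hbz (hinj hb hzB h), b, hb, rfl⟩
        · rintro ⟨hy, b, hb, rfl⟩
          exact ⟨b, ⟨fun h => hy (by rw [h]), hb⟩, rfl⟩
      have hcard : ((B.erase z).image Prod.snd).card = r := by
        rw [hkey, Finset.card_erase_of_mem (Finset.mem_image_of_mem _ hzB), hI]
        omega
      rcases hz' z hz with h | h
      · rwa [hkey] at h
      · omega
  · have hIle : I.card ≤ r := by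
      have h1 : I.card ≤ B.card := Finset.card_image_le
      omega
    by_cases hex : ∃ z ∈ Z, (B.erase z).image Prod.snd ∈ G0
    · obtain ⟨z₁, hz₁, hg⟩ := hex
      have hIr : I.card = r := by
        have h1 : ((B.erase z₁).image Prod.snd).card = r := hG0u _ hg
        have h2 : (B.erase z₁).image Prod.snd ⊆ I :=
          Finset.image_subset_image (Finset.erase_subset _ _)
        have h3 := Finset.card_le_card h2
        omega
      obtain ⟨u, hu, v, hv, huv, heq⟩ :=
        Finset.exists_ne_map_eq_of_card_lt_of_maps_to (t := I) (by omega)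
          (fun a ha => Finset.mem_image_of_mem _ ha)
      have hZne : (Z \ {u, v}).Nonempty := by
        rw [← Finset.card_pos]
        have h1 := Finset.card_le_card_sdiff_add_card (s := Z) (t := ({u, v} : Finset _))
        have h2 : ({u, v} : Finset (Fin t × Fin n)).card ≤ 2 :=
          (Finset.card_insert_le _ _).trans (by simp)
        omega
      obtain ⟨z, hzmem⟩ := hZne
      rw [Finset.mem_sdiff, Finset.mem_insert, Finset.mem_singleton] at hzmem
      obtain ⟨hz, hzuv⟩ := hzmem
      push_neg at hzuv
      have hzB : z ∈ B := hZB hz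
      have hu' : u ∈ B.erase z := Finset.mem_erase.mpr ⟨fun h => hzuv.1 h.symm, hu⟩
      have hv' : v ∈ B.erase z := Finset.mem_erase.mpr ⟨fun h => hzuv.2 h.symm, hv⟩
      have hlt : ((B.erase z).image Prod.snd).card < r := by
        have := helper_card_image_lt hu' hv' huv heq
        rwa [Finset.card_erase_of_mem hzB, hB] at this
      have hsub : I ⊆ insert z.2 ((B.erase z).image Prod.snd) := by
        intro y hy
        obtain ⟨b, hb, rfl⟩ := Finset.mem_image.mp hy
        by_cases hbz : b = z
        · subst hbz; exact Finset.mem_insert_self _ _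
        · exact Finset.mem_insert_of_mem
            (Finset.mem_image_of_mem _ (Finset.mem_erase.mpr ⟨hbz, hb⟩))
      have hIle2 := (Finset.card_le_card hsub).trans (Finset.card_insert_le _ _)
      rcases hz' z hz with h | h
      · have := hG0u _ h; omega
      · omega
    · push_neg at hex
      have hsum : ∀ z ∈ Z, ((z.2 : ℕ) : ZMod n) =
          (∑ a ∈ B, ((a.2 : ℕ) : ZMod n)) - j := by
        intro z hz
        rcases hz' z hz with h | h
        · exact absurd h (hex z hz)
        · have hs := Finset.sum_erase_eq_sub (f := fun a : Fin t × Fin n =>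
            ((a.2 : ℕ) : ZMod n)) (hZB hz)
          rw [hs] at h
          have := h.2
          -- ∑ B - z.2 = j
          have h4 : ((z.2 : ℕ) : ZMod n) = (∑ a ∈ B, ((a.2 : ℕ) : ZMod n)) - j := by
            rw [← this]; ring
          exact h4
      have hinj2 : Set.InjOn (fun a : Fin t × Fin n => a.1) (Z : Set (Fin t × Fin n)) := by
        intro a ha b hb h
        rw [Finset.mem_coe] at ha hb
        have h2 : ((a.2 : ℕ) : ZMod n) = ((b.2 : ℕ) : ZMod n) := by
          rw [hsum a ha, hsum b hb]
        have h3 : (a.2 : ℕ) = (b.2 : ℕ) := by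
          have := congrArg ZMod.val h2
          rwa [ZMod.val_cast_of_lt a.2.isLt, ZMod.val_cast_of_lt b.2.isLt] at this
        exact Prod.ext h (Fin.ext h3)
      have hcle : Z.card ≤ t := by
        have := Finset.card_le_card_of_injOn (fun a : Fin t × Fin n => a.1)
          (fun a _ => Finset.mem_univ a.1) hinj2
        simpa using this
      omega

theorem statement16 (n r k t : ℕ) (hk : 3 ≤ k) (hkr : k ≤ r + 1)
    (ht : t = k - 1) (hn : 0 < n) :
    (t : ℝ) ^ r * (exDaisy n r k : ℝ) + (1 / (n : ℝ)) * ((t * n).choose r : ℝ) -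
        (1 / (n : ℝ)) * (t : ℝ) ^ r * (n.choose r : ℝ) -
        (1 / 2) * (t : ℝ) ^ (r - 1) * ((t : ℝ) - 1) * ((n - 1).choose (r - 2) : ℝ)
      ≤ (exDaisy (t * n) r k : ℝ) := by
  haveI : NeZero n := ⟨hn.ne'⟩
  have hr : 2 ≤ r := by omega
  have ht0 : 0 < t := by omega
  obtain ⟨G0, hG0u, hG0f, hG0c⟩ := exists_extremal (k := k) (by omega) n r
  set V := Fin t × Fin n
  set Pr : Finset (Finset V) := (univ : Finset V).powersetCard r with hPrdef
  set T1 : Finset (Finset V) := Pr.filter (fun A => A.image Prod.snd ∈ G0) with hT1def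
  set T2 : ZMod n → Finset (Finset V) := fun j => Pr.filter
    (fun A => (A.image Prod.snd).card + 2 ≤ r ∧
      ∑ a ∈ A, ((a.2 : ℕ) : ZMod n) = j) with hT2def
  set T2all : Finset (Finset V) := Pr.filter
    (fun A => (A.image Prod.snd).card + 2 ≤ r) with hT2alldef
  set Br1 : Finset (Finset V) := Pr.filter
    (fun A => (A.image Prod.snd).card + 1 = r) with hBr1def
  set Br : Finset (Finset V) := Pr.filter
    (fun A => A.image Prod.snd ∈ (univ : Finset (Fin n)).powersetCard r) with hBrdef
  set c1 := (t * n).choose r with hc1def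
  set c2 := t ^ r * n.choose r with hc2def
  set c3 := n * ((n-1).choose (r-2) * (t.choose 2 * t^(r-2))) with hc3def
  -- cardinalities
  have hT1c : T1.card = t ^ r * exDaisy n r k := by
    rw [hT1def, hPrdef, graph_count ht0 G0 hG0u, hG0c]
  have hPrc : Pr.card = c1 := by
    rw [hPrdef, Finset.card_powersetCard, Finset.card_univ]
    rw [hc1def]
    congr 1
    show Fintype.card (Fin t × Fin n) = t * n
    simp
  have hBrc : Br.card = c2 := by
    rw [hBrdef, hPrdef, graph_count ht0 _ (fun E hE => Finset.mem_powersetCard_univ.mp hE),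
      Finset.card_powersetCard, Finset.card_univ, Fintype.card_fin, hc2def]
  have hBr1c : Br1.card ≤ c3 := br1_bound ht0 hn hr
  -- partition of Pr
  have hPartition : Pr = T2all ∪ (Br1 ∪ Br) := by
    ext A
    simp only [hT2alldef, hBr1def, hBrdef, Finset.mem_union, Finset.mem_filter,
      Finset.mem_powersetCard_univ]
    constructor
    · intro hA
      have him : (A.image Prod.snd).card ≤ A.card := Finset.card_image_le
      have hAc : A.card = r := by
        rw [hPrdef, Finset.mem_powersetCard_univ] at hA
        exact hA
      rcases (by omega : (A.image Prod.snd).card + 2 ≤ r ∨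
        (A.image Prod.snd).card + 1 = r ∨ (A.image Prod.snd).card = r) with h | h | h
      · exact Or.inl ⟨hA, h⟩
      · exact Or.inr (Or.inl ⟨hA, h⟩)
      · exact Or.inr (Or.inr ⟨hA, h⟩)
    · rintro (⟨h, -⟩ | ⟨h, -⟩ | ⟨h, -⟩) <;> exact h
  have hdisj1 : Disjoint T2all (Br1 ∪ Br) := by
    rw [Finset.disjoint_left]
    intro A hA hA'
    simp only [hT2alldef, hBr1def, hBrdef, Finset.mem_union, Finset.mem_filter,
      Finset.mem_powersetCard_univ] at hA hA'
    rcases hA' with ⟨-, h⟩ | ⟨-, h⟩ <;> omega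
  have hdisj2 : Disjoint Br1 Br := by
    rw [Finset.disjoint_left]
    intro A hA hA'
    simp only [hBr1def, hBrdef, Finset.mem_filter, Finset.mem_powersetCard_univ] at hA hA'
    omega
  have hPrsum : c1 = T2all.card + Br1.card + Br.card := by
    rw [← hPrc, hPartition, Finset.card_union_of_disjoint hdisj1,
      Finset.card_union_of_disjoint hdisj2]
    ring
  have hT2allc : c1 - (c2 + c3) ≤ T2all.card := by omega
  -- sum over j
  have hT2sum : ∑ j : ZMod n, (T2 j).card = T2all.card := by
    rw [hT2alldef]
    rw [Finset.card_eq_sum_card_fiberwise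
      (f := fun A : Finset V => ∑ a ∈ A, ((a.2 : ℕ) : ZMod n)) (t := univ)
      (fun A _ => Finset.mem_univ _)]
    apply Finset.sum_congr rfl
    intro j _
    congr 1
    rw [hT2def, hPrdef, Finset.filter_filter]
  have hdisjT : ∀ j, Disjoint T1 (T2 j) := by
    intro j
    rw [Finset.disjoint_left]
    intro A hA hA'
    simp only [hT1def, hT2def, Finset.mem_filter] at hA hA'
    have := hG0u _ hA.2
    omega
  -- averaging
  have hSum : n * (t ^ r * exDaisy n r k) + (c1 - (c2 + c3))
      ≤ ∑ j : ZMod n, (T1 ∪ T2 j).card := by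
    have h1 : ∀ j : ZMod n, (T1 ∪ T2 j).card = T1.card + (T2 j).card :=
      fun j => Finset.card_union_of_disjoint (hdisjT j)
    rw [Finset.sum_congr rfl (fun j _ => h1 j), Finset.sum_add_distrib,
      Finset.sum_const, Finset.card_univ, ZMod.card, hT2sum, hT1c, smul_eq_mul]
    omega
  have havg : ∃ j : ZMod n, n * (t ^ r * exDaisy n r k) + (c1 - (c2 + c3))
      ≤ n * (T1 ∪ T2 j).card := by
    obtain ⟨j, -, hj⟩ := Finset.exists_le_of_sum_le (s := (univ : Finset (ZMod n)))
      (f := fun _ => ∑ j' : ZMod n, (T1 ∪ T2 j').card)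
      (g := fun j => n * (T1 ∪ T2 j).card)
      ⟨0, Finset.mem_univ 0⟩
      (by
        rw [Finset.sum_const, Finset.card_univ, ZMod.card, smul_eq_mul, ← Finset.mul_sum])
    exact ⟨j, le_trans hSum hj⟩
  obtain ⟨j, hj⟩ := havg
  -- transfer to Fin (t*n)
  have hexT : (T1 ∪ T2 j).card ≤ exDaisy (t * n) r k := by
    set e : V ≃ Fin (t * n) := finProdFinEquiv
    refine le_exDaisy ⟨(T1 ∪ T2 j).image (fun A => A.image e), ?_, ?_, ?_⟩
    · intro E hE
      obtain ⟨A, hA, rfl⟩ := Finset.mem_image.mp hE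
      rw [Finset.card_image_of_injective _ e.injective]
      rw [Finset.mem_union, hT1def, hT2def] at hA
      rcases hA with hA | hA <;>
        exact Finset.mem_powersetCard_univ.mp (Finset.mem_filter.mp hA).1
    · exact daisyFree_map e (gj_free hk hkr ht hn G0 hG0u hG0f j)
    · exact Finset.card_image_of_injective _ (Finset.image_injective e.injective)
  have hfinal : n * (t ^ r * exDaisy n r k) + (c1 - (c2 + c3))
      ≤ n * exDaisy (t * n) r k :=
    le_trans hj (Nat.mul_le_mul_left n hexT)
  -- real arithmetic
  have hnR : (0 : ℝ) < n := by exact_mod_cast hn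
  have e1 : (c3 : ℝ) = (n : ℝ) * ((1:ℝ)/2 * (t:ℝ)^(r-1) * ((t:ℝ)-1) * ((n-1).choose (r-2) : ℝ)) := by
    have hpow : (t:ℝ)^(r-1) = (t:ℝ)^(r-2) * t := by
      rw [← pow_succ]
      congr 1
      omega
    rw [hpow, hc3def]
    push_cast [Nat.cast_choose_two]
    ring
  have e2 : (c2 : ℝ) = (t:ℝ)^r * (n.choose r : ℝ) := by rw [hc2def]; push_cast; ring
  have hcast : (c1 : ℝ) - ((c2 : ℝ) + (c3 : ℝ)) ≤ ((c1 - (c2 + c3) : ℕ) : ℝ) := by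
    rcases le_total (c2 + c3) c1 with h | h
    · rw [Nat.cast_sub h]; push_cast; ring_nf; rfl
    · have h0 : c1 - (c2 + c3) = 0 := Nat.sub_eq_zero_of_le h
      rw [h0]
      have : (c1 : ℝ) ≤ (c2 : ℝ) + (c3 : ℝ) := by exact_mod_cast h
      simp
      linarith
  have hfinalR : (n:ℝ) * (t ^ r * (exDaisy n r k : ℝ)) + ((c1 - (c2 + c3) : ℕ) : ℝ)
      ≤ (n:ℝ) * (exDaisy (t * n) r k : ℝ) := by exact_mod_cast hfinal
  rw [← mul_le_mul_iff_right₀ hnR]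
  have key : (n:ℝ) * ((t : ℝ) ^ r * (exDaisy n r k : ℝ) + (1 / (n : ℝ)) * ((t * n).choose r : ℝ) -
        (1 / (n : ℝ)) * (t : ℝ) ^ r * (n.choose r : ℝ) -
        (1 / 2) * (t : ℝ) ^ (r - 1) * ((t : ℝ) - 1) * ((n - 1).choose (r - 2) : ℝ))
      = (n:ℝ) * ((t:ℝ) ^ r * (exDaisy n r k : ℝ)) + (c1 : ℝ) - ((c2 : ℝ) + (c3 : ℝ)) := by
    rw [e1, e2, hc1def]
    field_simp
    ring
  rw [key]
  linarith
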